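/- If S is a two-distance set of n points in R^d, then n ≤ (d+1)(d+2)/2. -/

import Mathlib

open Polynomial Matrix

noncomputable section

/-- The Borsuk number of a bounded set `S`: the least `k` such that `S` can be covered
by `k` subsets each of diameter strictly smaller than the diameter of `S`. -/
def borsukNumber {d : ℕ} (S : Set (EuclideanSpace ℝ (Fin d))) : ℕ :=
  sInf {k | ∃ c : Fin k → Set (EuclideanSpace ℝ (Fin d)),
    (∀ i, c i ⊆ S ∧ Metric.diam (c i) < Metric.diam S) ∧ S ⊆ ⋃ i, c i}

/-- The clique covering number `θ(G)`: the least number of cliques covering all vertices. -/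
def cliqueCoverNumber {V : Type*} (G : SimpleGraph V) : ℕ :=
  sInf {k | ∃ c : Fin k → Set V, (∀ i, G.IsClique (c i)) ∧ (⋃ i, c i) = Set.univ}

/-- The bordered matrix `A_G(t)`: first row and column `(0,1,…,1)`, zero diagonal,
entry `1` at edges of `G` and `t` at non-edges. The `none` index is the border. -/
def graphMat {n : ℕ} (G : SimpleGraph (Fin n)) [DecidableRel G.Adj]
    {R : Type*} [CommRing R] (t : R) : Matrix (Option (Fin n)) (Option (Fin n)) R :=
  fun i j => match i, j with
  | none, none => 0
  | none, some _ => 1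
  | some _, none => 1
  | some i, some j => if i = j then 0 else if G.Adj i j then 1 else t

/-- `C_G(t) = det A_G(t)` as a polynomial in `t`. -/
def graphPoly {n : ℕ} (G : SimpleGraph (Fin n)) [DecidableRel G.Adj] : Polynomial ℝ :=
  (graphMat G (Polynomial.X : Polynomial ℝ)).det

/-- `τ₁(G)`: the smallest root `t > 1` of `C_G`. -/
def tau1 {n : ℕ} (G : SimpleGraph (Fin n)) [DecidableRel G.Adj] : ℝ :=
  sInf {t : ℝ | 1 < t ∧ (graphPoly G).IsRoot t}

open scoped Classical in
/-- `μ(G)`: the multiplicity of the smallest root `t > 1` of `C_G`, or `0` if none exists. -/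
def mu {n : ℕ} (G : SimpleGraph (Fin n)) [DecidableRel G.Adj] : ℕ :=
  if (∃ t : ℝ, 1 < t ∧ (graphPoly G).IsRoot t) then
    (graphPoly G).rootMultiplicity (tau1 G) else 0

/-- `f` realizes `G` in Euclidean space as a two-distance set: distance `1` on edges
and distance `b` on non-edges. -/
def IsRealization {n d : ℕ} (G : SimpleGraph (Fin n)) (b : ℝ)
    (f : Fin n → EuclideanSpace ℝ (Fin d)) : Prop :=
  (∀ i j, G.Adj i j → dist (f i) (f j) = 1) ∧
  (∀ i j, i ≠ j → ¬ G.Adj i j → dist (f i) (f j) = b)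

/-- The Cayley–Menger matrix of a tuple of points (the `none` index is the border). -/
def cmMat {n d : ℕ} (p : Fin n → EuclideanSpace ℝ (Fin d)) :
    Matrix (Option (Fin n)) (Option (Fin n)) ℝ :=
  fun i j => match i, j with
  | none, none => 0
  | none, some _ => 1
  | some _, none => 1
  | some i, some j => dist (p i) (p j) ^ 2

/-- `G` is a disjoint union of cliques (adjacency is transitive). -/
def IsUnionOfCliques {V : Type*} (G : SimpleGraph V) : Prop :=
  ∀ u v w, G.Adj u v → G.Adj v w → u ≠ w → G.Adj u w

/-- `G` is complete multipartite (non-adjacency is transitive). -/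
def IsCompleteMultipartite {V : Type*} (G : SimpleGraph V) : Prop :=
  ∀ u v w, ¬ G.Adj u v → ¬ G.Adj v w → ¬ G.Adj u w

/-- The clique number `ω(G)`. -/
def cliqueNumber {V : Type*} (G : SimpleGraph V) : ℕ :=
  sSup {k | ∃ s : Finset V, G.IsNClique k s}

private lemma dist_sq_eq {d : ℕ} (x p : EuclideanSpace ℝ (Fin d)) :
    dist x p ^ 2 = ∑ i, (x i - p i)^2 := by
  rw [EuclideanSpace.dist_eq, Real.sq_sqrt (by positivity)]
  congr 1
  funext i
  rw [Real.dist_eq, sq_abs]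

private lemma sum_sub_sq {d : ℕ} (x p : Fin d → ℝ) :
    ∑ i, (x i - p i)^2 = (∑ i, x i^2) - 2*(∑ i, x i * p i) + ∑ i, (p i)^2 := by
  rw [Finset.mul_sum, ← Finset.sum_sub_distrib, ← Finset.sum_add_distrib]
  exact Finset.sum_congr rfl fun i _ => by ring

private lemma double_sum_sq {d : ℕ} (x p : Fin d → ℝ) :
    ∑ i, ∑ j, (4 * p i * p j) * (x i * x j) = 4 * (∑ i, x i * p i)^2 := by
  calc ∑ i, ∑ j, (4 * p i * p j) * (x i * x j)
      = ∑ i, ∑ j, (2*(x i * p i)) * (2*(x j * p j)) :=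
        Finset.sum_congr rfl fun i _ => Finset.sum_congr rfl fun j _ => by ring
    _ = (∑ i, 2*(x i * p i)) * (∑ j, 2*(x j * p j)) := (Finset.sum_mul_sum _ _ _ _).symm
    _ = 4 * (∑ i, x i * p i)^2 := by rw [← Finset.mul_sum]; ring

private def basisFun (d : ℕ) :
    (Unit ⊕ (Fin d ⊕ (Sym2 (Fin d) ⊕ Option (Fin d)))) → (EuclideanSpace ℝ (Fin d) → ℝ)
  | .inl _ => fun x => (∑ i, x i^2)^2
  | .inr (.inl k) => fun x => (∑ i, x i^2) * x k
  | .inr (.inr (.inl s)) =>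
      Sym2.lift ⟨fun i j => fun x => x i * x j, fun _ _ => funext fun _ => mul_comm _ _⟩ s
  | .inr (.inr (.inr (some k))) => fun x => x k
  | .inr (.inr (.inr none)) => fun _ => 1

private lemma XX_mem {d : ℕ} (i j : Fin d) :
    (fun x : EuclideanSpace ℝ (Fin d) => x i * x j) ∈
      Submodule.span ℝ (Set.range (basisFun d)) := by
  have h : (fun x : EuclideanSpace ℝ (Fin d) => x i * x j)
      = basisFun d (.inr (.inr (.inl (Sym2.mk i j)))) := by simp [basisFun]
  rw [h]
  exact Submodule.subset_span ⟨_, rfl⟩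

private lemma F_mem_span {d : ℕ} (a b : ℝ) (p : EuclideanSpace ℝ (Fin d)) :
    (fun x : EuclideanSpace ℝ (Fin d) => (a^2 - dist x p^2) * (b^2 - dist x p^2)) ∈
      Submodule.span ℝ (Set.range (basisFun d)) := by
  set V := Submodule.span ℝ (Set.range (basisFun d)) with hV
  set P : ℝ := a^2 - ∑ i, (p i)^2 with hP
  set Q : ℝ := b^2 - ∑ i, (p i)^2 with hQ
  have key : (fun x : EuclideanSpace ℝ (Fin d) => (a^2 - dist x p^2) * (b^2 - dist x p^2)) =
      basisFun d (.inl ())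
      + (∑ k, (-4 * p k) • basisFun d (.inr (.inl k)))
      + (∑ i, ∑ j, (4 * p i * p j) • ((fun x => x i * x j) : EuclideanSpace ℝ (Fin d) → ℝ))
      + (∑ i, (-(P+Q)) • ((fun x => x i * x i) : EuclideanSpace ℝ (Fin d) → ℝ))
      + (∑ k, (2*(P+Q) * p k) • ((fun x => x k) : EuclideanSpace ℝ (Fin d) → ℝ))
      + (P*Q) • ((fun _ => 1) : EuclideanSpace ℝ (Fin d) → ℝ) := by
    funext x
    simp only [basisFun, Pi.add_apply, Finset.sum_apply, Pi.smul_apply, smul_eq_mul,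
      Pi.one_apply, mul_one]
    rw [dist_sq_eq, sum_sub_sq, double_sum_sq]
    have e1 : ∑ k, -4 * p k * ((∑ i, x i ^ 2) * x k)
        = (-4*(∑ i, x i ^ 2)) * ∑ k, x k * p k := by
      rw [Finset.mul_sum]; exact Finset.sum_congr rfl fun k _ => by ring
    have e2 : ∑ i, -(P+Q) * (x i * x i) = (-(P+Q)) * ∑ i, x i ^ 2 := by
      rw [Finset.mul_sum]; exact Finset.sum_congr rfl fun i _ => by ring
    have e3 : ∑ k, 2*(P+Q) * p k * x k = (2*(P+Q)) * ∑ k, x k * p k := by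
      rw [Finset.mul_sum]; exact Finset.sum_congr rfl fun k _ => by ring
    rw [e1, e2, e3, hP, hQ]
    ring
  rw [key]
  refine V.add_mem (V.add_mem (V.add_mem (V.add_mem (V.add_mem ?_ ?_) ?_) ?_) ?_) ?_
  · exact Submodule.subset_span ⟨_, rfl⟩
  · exact V.sum_mem fun k _ => V.smul_mem _ (Submodule.subset_span ⟨_, rfl⟩)
  · exact V.sum_mem fun i _ => V.sum_mem fun j _ => V.smul_mem _ (XX_mem i j)
  · exact V.sum_mem fun i _ => V.smul_mem _ (XX_mem i i)
  · exact V.sum_mem fun k _ => V.smul_mem _ (Submodule.subset_span ⟨.inr (.inr (.inr (some k))), rfl⟩)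
  · exact V.smul_mem _ (Submodule.subset_span ⟨.inr (.inr (.inr none)), rfl⟩)
private lemma quartic_aux {α β γ δ ε : ℝ}
    (h : ∀ r : ℝ, α*r^4 + β*r^3 + γ*r^2 + δ*r + ε = 0) : α = 0 ∧ β = 0 := by
  have h0 := h 0
  have h1 := h 1
  have h2 := h 2
  have h3 := h (-1)
  have h4 := h (-2)
  norm_num at h0 h1 h2 h3 h4
  constructor <;> linarith

private def vFun {d : ℕ} (S : Finset (EuclideanSpace ℝ (Fin d))) (a b : ℝ) :
    ({x // x ∈ S} ⊕ Option (Fin d)) → (EuclideanSpace ℝ (Fin d) → ℝ)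
  | .inl p => fun x => (a^2 - dist x (p : EuclideanSpace ℝ (Fin d)) ^ 2)
      * (b^2 - dist x (p : EuclideanSpace ℝ (Fin d)) ^ 2)
  | .inr (some k) => fun x => x k
  | .inr none => fun _ => 1

private lemma swap_aux {ι κ : Type*} [Fintype ι] [Fintype κ]
    (c : ι → ℝ) (q : ι → κ → ℝ) (lf : κ → ℝ) (l0 : ℝ) :
    ∑ i, c i * (-(∑ k, lf k * q i k) - l0)
      = -(∑ k, lf k * (∑ i, c i * q i k)) - l0 * (∑ i, c i) := by
  have e : ∀ i, c i * (-(∑ k, lf k * q i k) - l0)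
      = (∑ k, -(lf k * (c i * q i k))) - l0 * c i := by
    intro i
    have : ∑ k, -(lf k * (c i * q i k)) = -(c i * ∑ k, lf k * q i k) := by
      rw [Finset.mul_sum, ← Finset.sum_neg_distrib]
      exact Finset.sum_congr rfl fun k _ => by ring
    rw [this]; ring
  rw [Finset.sum_congr rfl fun i _ => e i, Finset.sum_sub_distrib, Finset.sum_comm]
  congr 1
  · rw [← Finset.sum_neg_distrib]
    refine Finset.sum_congr rfl fun k _ => ?_
    rw [Finset.mul_sum, ← Finset.sum_neg_distrib]
  · rw [Finset.mul_sum]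

private lemma indep_aux {d : ℕ} (hd : 0 < d) (S : Finset (EuclideanSpace ℝ (Fin d)))
    (a b : ℝ) (ha : 0 < a) (hb : 0 < b)
    (hdist : ∀ p ∈ S, ∀ q ∈ S, p ≠ q → dist p q = a ∨ dist p q = b) :
    LinearIndependent ℝ (vFun S a b) := by
  classical
  rw [Fintype.linearIndependent_iff]
  intro g hg
  set c : {x // x ∈ S} → ℝ := fun p => g (.inl p) with hc
  set lf : Fin d → ℝ := fun k => g (.inr (some k)) with hlf
  set l0 : ℝ := g (.inr none) with hl0
  have heval : ∀ x : EuclideanSpace ℝ (Fin d),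
      (∑ p : {y // y ∈ S}, c p * ((a^2 - dist x (p : EuclideanSpace ℝ (Fin d)) ^ 2)
          * (b^2 - dist x (p : EuclideanSpace ℝ (Fin d)) ^ 2)))
        + ((∑ k, lf k * x k) + l0) = 0 := by
    intro x
    have h0 := congrFun hg x
    simp only [Finset.sum_apply, Pi.smul_apply, smul_eq_mul, Pi.zero_apply,
      Fintype.sum_sum_type, Fintype.sum_option, vFun] at h0
    linarith [h0]
  -- key step: extract top coefficients of the quartic obtained along rays
  have hstep : ∀ y : EuclideanSpace ℝ (Fin d),
      ((∑ p : {x // x ∈ S}, c p) * (∑ i, y i ^ 2)^2 = 0) ∧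
      ((∑ i, y i ^ 2) * (∑ p : {x // x ∈ S},
          c p * (∑ i, y i * (p : EuclideanSpace ℝ (Fin d)) i)) = 0) := by
    intro y
    set N : ℝ := ∑ i, y i ^ 2 with hN
    set T : {x // x ∈ S} → ℝ :=
      fun p => ∑ i, y i * (p : EuclideanSpace ℝ (Fin d)) i with hT
    set m : {x // x ∈ S} → ℝ :=
      fun p => ∑ i, ((p : EuclideanSpace ℝ (Fin d)) i) ^ 2 with hm
    have hD : ∀ (r : ℝ) (p : {x // x ∈ S}),
        dist (r • y) (p : EuclideanSpace ℝ (Fin d)) ^ 2 = r^2*N - 2*r*T p + m p := by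
      intro r p
      rw [dist_sq_eq]
      have e : ∀ i : Fin d, ((r • y) i - (p : EuclideanSpace ℝ (Fin d)) i)^2
          = r^2 * (y i)^2 - 2*r*(y i * (p : EuclideanSpace ℝ (Fin d)) i)
            + ((p : EuclideanSpace ℝ (Fin d)) i)^2 := by
        intro i
        rw [PiLp.smul_apply, smul_eq_mul]
        ring
      rw [Finset.sum_congr rfl fun i _ => e i, Finset.sum_add_distrib,
        Finset.sum_sub_distrib, ← Finset.mul_sum, ← Finset.mul_sum]
    have hpoly : ∀ r : ℝ,
        ((∑ p : {x // x ∈ S}, c p) * N^2) * r^4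
        + (∑ p : {x // x ∈ S}, c p * (-(4*N)*T p)) * r^3
        + (∑ p : {x // x ∈ S}, c p * (4*(T p)^2 - N*((a^2 - m p) + (b^2 - m p)))) * r^2
        + ((∑ p : {x // x ∈ S}, c p * (2*(T p)*((a^2 - m p) + (b^2 - m p))))
            + (∑ k, lf k * y k)) * r
        + ((∑ p : {x // x ∈ S}, c p * ((a^2 - m p)*(b^2 - m p))) + l0) = 0 := by
      intro r
      have h1 := heval (r • y)
      have h2 : ∀ p : {x // x ∈ S},
          c p * ((a^2 - dist (r • y) (p : EuclideanSpace ℝ (Fin d)) ^ 2)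
            * (b^2 - dist (r • y) (p : EuclideanSpace ℝ (Fin d)) ^ 2))
          = c p * N^2 * r^4 + c p * (-(4*N)*T p) * r^3
            + c p * (4*(T p)^2 - N*((a^2 - m p) + (b^2 - m p))) * r^2
            + c p * (2*(T p)*((a^2 - m p) + (b^2 - m p))) * r
            + c p * ((a^2 - m p)*(b^2 - m p)) := by
        intro p
        rw [hD r p]
        ring
      rw [Finset.sum_congr rfl fun p _ => h2 p, Finset.sum_add_distrib,
        Finset.sum_add_distrib, Finset.sum_add_distrib, Finset.sum_add_distrib] at h1
      simp only [← Finset.sum_mul] at h1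
      have hry : ∑ k, lf k * ((r • y) k) = (∑ k, lf k * y k) * r := by
        rw [Finset.sum_mul]
        exact Finset.sum_congr rfl fun k _ => by
          rw [PiLp.smul_apply, smul_eq_mul]; ring
      rw [hry] at h1
      linear_combination h1
    obtain ⟨hA, hB⟩ := quartic_aux hpoly
    constructor
    · exact hA
    · have hB' : (-(4*N)) * (∑ p : {x // x ∈ S}, c p * T p) = 0 := by
        rw [Finset.mul_sum, ← hB]
        exact Finset.sum_congr rfl fun p _ => by ring
      rcases mul_eq_zero.mp hB' with h | h
      · have : N = 0 := by linarith
        rw [this, zero_mul]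
      · rw [h, mul_zero]
  -- the sum of the coefficients vanishes
  have hCsum : ∑ p : {x // x ∈ S}, c p = 0 := by
    set y0 : EuclideanSpace ℝ (Fin d) := EuclideanSpace.single (⟨0, hd⟩ : Fin d) (1:ℝ) with hy0
    have hN0 : ∑ i, (y0 i)^2 = 1 := by
      have e : ∀ i : Fin d, (y0 i)^2 = if i = (⟨0, hd⟩ : Fin d) then 1 else 0 := by
        intro i
        rw [hy0, EuclideanSpace.single_apply]
        split <;> norm_num
      rw [Finset.sum_congr rfl fun i _ => e i, Finset.sum_ite_eq' Finset.univ]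
      simp
    have := (hstep y0).1
    rw [hN0] at this
    simpa using this
  -- the weighted barycenter vanishes
  have hwzero : ∀ k : Fin d,
      (∑ p : {x // x ∈ S}, c p * (p : EuclideanSpace ℝ (Fin d)) k) = 0 := by
    set w : EuclideanSpace ℝ (Fin d) := (WithLp.equiv 2 (Fin d → ℝ)).symm
      (fun i => ∑ p : {x // x ∈ S}, c p * (p : EuclideanSpace ℝ (Fin d)) i) with hwdef
    have hw : ∀ i, w i = ∑ p : {x // x ∈ S}, c p * (p : EuclideanSpace ℝ (Fin d)) i := by
      intro i
      rw [hwdef, WithLp.equiv_symm_apply, PiLp.toLp_apply]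
    have hTw : (∑ p : {x // x ∈ S}, c p * (∑ i, w i * (p : EuclideanSpace ℝ (Fin d)) i))
        = ∑ i, w i ^ 2 := by
      calc ∑ p : {x // x ∈ S}, c p * (∑ i, w i * (p : EuclideanSpace ℝ (Fin d)) i)
          = ∑ p : {x // x ∈ S}, ∑ i, w i * (c p * (p : EuclideanSpace ℝ (Fin d)) i) := by
            refine Finset.sum_congr rfl fun p _ => ?_
            rw [Finset.mul_sum]
            exact Finset.sum_congr rfl fun i _ => by ring
        _ = ∑ i, ∑ p : {x // x ∈ S}, w i * (c p * (p : EuclideanSpace ℝ (Fin d)) i) :=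
            Finset.sum_comm
        _ = ∑ i, w i ^ 2 := by
            refine Finset.sum_congr rfl fun i _ => ?_
            rw [← Finset.mul_sum, ← hw i]
            ring
    have h6 := (hstep w).2
    rw [hTw] at h6
    have h7 : ∑ i, (w i)^2 = 0 := mul_self_eq_zero.mp h6
    intro k
    rw [← hw k]
    have := Finset.sum_eq_zero_iff_of_nonneg
      (fun i _ => sq_nonneg (w i)) |>.mp h7 k (Finset.mem_univ k)
    exact pow_eq_zero_iff (by norm_num) |>.mp this
  -- evaluation at the points of S
  have hcq : ∀ q : {x // x ∈ S}, c q * (a^2*b^2)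
      = -(∑ k, lf k * (q : EuclideanSpace ℝ (Fin d)) k) - l0 := by
    intro q
    have h7 := heval (q : EuclideanSpace ℝ (Fin d))
    have h8 : ∑ p : {y // y ∈ S},
        c p * ((a^2 - dist (q : EuclideanSpace ℝ (Fin d)) (p : EuclideanSpace ℝ (Fin d)) ^ 2)
          * (b^2 - dist (q : EuclideanSpace ℝ (Fin d)) (p : EuclideanSpace ℝ (Fin d)) ^ 2))
        = c q * (a^2*b^2) := by
      rw [Finset.sum_eq_single q]
      · rw [dist_self]
        ring
      · intro p _ hpq
        have hne : (q : EuclideanSpace ℝ (Fin d)) ≠ (p : EuclideanSpace ℝ (Fin d)) :=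
          fun hh => hpq (Subtype.ext hh.symm)
        rcases hdist _ q.2 _ p.2 hne with h | h <;> rw [h] <;> ring
      · intro hq
        exact absurd (Finset.mem_univ q) hq
    rw [h8] at h7
    linarith
  -- all c vanish
  have hc0 : ∀ q : {x // x ∈ S}, c q = 0 := by
    have h9 : ∑ q : {x // x ∈ S}, (c q)^2 * (a^2*b^2) = 0 := by
      have e : ∀ q : {x // x ∈ S}, (c q)^2 * (a^2*b^2)
          = c q * (-(∑ k, lf k * (q : EuclideanSpace ℝ (Fin d)) k) - l0) := by
        intro q
        rw [← hcq q]
        ring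
      rw [Finset.sum_congr rfl fun q _ => e q,
        swap_aux c (fun q k => (q : EuclideanSpace ℝ (Fin d)) k) lf l0]
      rw [hCsum, mul_zero, sub_zero]
      rw [Finset.sum_eq_zero fun k _ => by rw [hwzero k, mul_zero]]
      simp
    intro q
    have := Finset.sum_eq_zero_iff_of_nonneg
      (fun q _ => by positivity) |>.mp h9 q (Finset.mem_univ q)
    have hab : (0:ℝ) < a^2*b^2 := by positivity
    have : (c q)^2 = 0 := by
      rcases mul_eq_zero.mp this with h | h
      · exact h
      · linarith
    exact pow_eq_zero_iff (by norm_num) |>.mp this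
  -- the affine part vanishes
  have hlin : ∀ x : EuclideanSpace ℝ (Fin d), (∑ k, lf k * x k) + l0 = 0 := by
    intro x
    have := heval x
    rw [Finset.sum_eq_zero fun p _ => by rw [hc0 p, zero_mul]] at this
    linarith
  have hl0z : l0 = 0 := by
    have := hlin 0
    simpa using this
  have hlfz : ∀ k, lf k = 0 := by
    intro k
    have h10 := hlin (EuclideanSpace.single k (1:ℝ))
    have e : ∀ j : Fin d, lf j * (EuclideanSpace.single k (1:ℝ)) j
        = if j = k then lf j else 0 := by
      intro j
      rw [EuclideanSpace.single_apply]
      split <;> simp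
    rw [Finset.sum_congr rfl fun j _ => e j, Finset.sum_ite_eq' Finset.univ] at h10
    simp only [Finset.mem_univ, if_true, hl0z, add_zero] at h10
    exact h10
  rintro (p | k)
  · exact hc0 p
  · cases k with
    | none => exact hl0z
    | some k => exact hlfz k

private lemma count_aux {d : ℕ} (hd : 0 < d) (S : Finset (EuclideanSpace ℝ (Fin d)))
    (a b : ℝ) (ha : 0 < a) (hb : 0 < b)
    (hdist : ∀ p ∈ S, ∀ q ∈ S, p ≠ q → dist p q = a ∨ dist p q = b) :
    S.card ≤ (d + 1) * (d + 2) / 2 := by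
  classical
  set V := Submodule.span ℝ (Set.range (basisFun d)) with hV
  haveI : FiniteDimensional ℝ V := FiniteDimensional.span_of_finite ℝ (Set.finite_range _)
  have hmem : ∀ i, vFun S a b i ∈ V := by
    rintro (p | k)
    · exact F_mem_span a b _
    · cases k with
      | none => exact Submodule.subset_span ⟨.inr (.inr (.inr none)), rfl⟩
      | some k => exact Submodule.subset_span ⟨.inr (.inr (.inr (some k))), rfl⟩
  have hind := indep_aux hd S a b ha hb hdist
  let v' : ({x // x ∈ S} ⊕ Option (Fin d)) → V := fun i => ⟨vFun S a b i, hmem i⟩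
  have hind' : LinearIndependent ℝ v' := by
    apply LinearIndependent.of_comp V.subtype
    exact hind
  have h1 := hind'.fintype_card_le_finrank
  have h2 : Module.finrank ℝ V
      ≤ Fintype.card (Unit ⊕ (Fin d ⊕ (Sym2 (Fin d) ⊕ Option (Fin d)))) :=
    finrank_range_le_card (basisFun d)
  have h3 : Fintype.card ({x // x ∈ S} ⊕ Option (Fin d)) = S.card + (d+1) := by simp
  have h4 : Fintype.card (Unit ⊕ (Fin d ⊕ (Sym2 (Fin d) ⊕ Option (Fin d))))
      = 1 + (d + ((d+1).choose 2 + (d+1))) := by simp [Sym2.card]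
  have h5 : S.card + (d+1) ≤ 1 + (d + ((d+1).choose 2 + (d+1))) := by
    rw [← h3, ← h4]
    exact le_trans h1 h2
  obtain ⟨k, hk⟩ := Nat.even_mul_succ_self d
  have h6 : (d+1).choose 2 = (d+1)*d/2 := Nat.choose_two_right _
  have h7 : (d+1)*d = k + k := by rw [mul_comm]; exact hk
  have h8 : (d+1)*(d+2) = (k+k) + 2*(d+1) := by rw [← hk]; ring
  rw [h6, h7] at h5
  rw [h8]
  omega

theorem stmt1 {d : ℕ} (S : Finset (EuclideanSpace ℝ (Fin d)))
    (h : ({r : ℝ | ∃ p ∈ S, ∃ q ∈ S, p ≠ q ∧ dist p q = r}).ncard ≤ 2) :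
    S.card ≤ (d + 1) * (d + 2) / 2 := by
  classical
  by_cases hS1 : S.card ≤ 1
  · refine hS1.trans ?_
    rw [Nat.le_div_iff_mul_le (by norm_num)]
    calc 1 * 2 = 1 * 2 := rfl
      _ ≤ (d+1)*(d+2) := Nat.mul_le_mul (by omega) (by omega)
  · push_neg at hS1
    obtain ⟨p0, hp0, q0, hq0, hpq0⟩ := Finset.one_lt_card.mp hS1
    have hd : 0 < d := by
      rcases Nat.eq_zero_or_pos d with h0 | h0
      · subst h0
        exact absurd (Subsingleton.elim p0 q0) hpq0
      · exact h0
    set D := {r : ℝ | ∃ p ∈ S, ∃ q ∈ S, p ≠ q ∧ dist p q = r} with hD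
    have hDfin : D.Finite := by
      apply Set.Finite.subset
        (Set.Finite.image (fun pq : _ × _ => dist pq.1 pq.2) (S ×ˢ S).finite_toSet)
      rintro r ⟨p, hp, q, hq, -, rfl⟩
      exact ⟨(p, q), by simp [hp, hq], rfl⟩
    have hpos : ∀ r ∈ D, 0 < r := by
      rintro r ⟨p, hp, q, hq, hne, rfl⟩
      exact dist_pos.mpr hne
    have haD : dist p0 q0 ∈ D := ⟨p0, hp0, q0, hq0, hpq0, rfl⟩
    obtain ⟨a, b, ha, hb, hcov⟩ : ∃ a b : ℝ, 0 < a ∧ 0 < b ∧ ∀ r ∈ D, r = a ∨ r = b := by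
      by_cases h2 : ∀ r ∈ D, r = dist p0 q0
      · exact ⟨_, _, hpos _ haD, hpos _ haD, fun r hr => Or.inl (h2 r hr)⟩
      · push_neg at h2
        obtain ⟨b', hb', hbne⟩ := h2
        refine ⟨dist p0 q0, b', hpos _ haD, hpos _ hb', ?_⟩
        intro r hr
        by_contra hcon
        push_neg at hcon
        have h3 : ({dist p0 q0, b', r} : Set ℝ).ncard = 3 :=
          Set.ncard_eq_three.mpr ⟨_, _, _, fun hh => hbne hh.symm, fun hh => hcon.1 hh.symm,
            fun hh => hcon.2 hh.symm, rfl⟩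
        have h4 : ({dist p0 q0, b', r} : Set ℝ) ⊆ D := by
          intro x hx
          rcases hx with rfl | rfl | rfl
          · exact haD
          · exact hb'
          · exact hr
        have h5 := Set.ncard_le_ncard h4 hDfin
        rw [h3] at h5
        omega
    exact count_aux hd S a b ha hb
      (fun p hp q hq hne => hcov _ ⟨p, hp, q, hq, hne, rfl⟩)
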